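/- Positive semidefiniteness propagates along the Riccati difference equation: if Π_N = F is symmetric positive semidefinite and Π_k = A_kᵀΠ_{k+1}A_k − A_kᵀΠ_{k+1}B_k(I + B_kᵀΠ_{k+1}B_k)⁻¹B_kᵀΠ_{k+1}A_k for k = N−1, …, 0, then for every k ∈ {0,…,N−1} the matrix I + B_kᵀΠ_{k+1}B_k is positive definite, and for every k ∈ {0,…,N} the matrix Π_k is symmetric positive semidefinite (indeed Π_k = A_kᵀΠ_{k+1}^{1/2}(I + Π_{k+1}^{1/2}B_kB_kᵀΠ_{k+1}^{1/2})⁻¹Π_{k+1}^{1/2}A_k, where Π_{k+1}^{1/2} is the positive semidefinite square root). -/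

import Mathlib

open Matrix

open scoped MatrixOrder in
lemma riccati_key {n m : ℕ} (A : Matrix (Fin n) (Fin n) ℝ) (B : Matrix (Fin n) (Fin m) ℝ)
    (P : Matrix (Fin n) (Fin n) ℝ) (hP : P.PosSemidef) :
    ((1 : Matrix (Fin m) (Fin m) ℝ) + Bᵀ * P * B).PosDef ∧
    ∃ S : Matrix (Fin n) (Fin n) ℝ, S.PosSemidef ∧ S * S = P ∧
      Aᵀ * P * A - Aᵀ * P * B *
        ((1 : Matrix (Fin m) (Fin m) ℝ) + Bᵀ * P * B)⁻¹ * Bᵀ * P * A =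
      Aᵀ * S * ((1 : Matrix (Fin n) (Fin n) ℝ) + S * B * Bᵀ * S)⁻¹ * S * A ∧
      (Aᵀ * S * ((1 : Matrix (Fin n) (Fin n) ℝ) + S * B * Bᵀ * S)⁻¹ * S * A).PosSemidef := by
  set S := CFC.sqrt P with hSdef
  have hS : S.PosSemidef := (CFC.sqrt_nonneg P).posSemidef
  have hSS : S * S = P := CFC.sqrt_mul_sqrt_self P hP.nonneg
  have hSt : Sᵀ = S := hS.1
  set C := S * B with hC
  have hBPB : Bᵀ * P * B = Cᵀ * C := by
    rw [← hSS, hC, transpose_mul, hSt]; simp only [Matrix.mul_assoc]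
  have hSBBS : S * B * Bᵀ * S = C * Cᵀ := by
    rw [hC, transpose_mul, hSt]; simp only [Matrix.mul_assoc]
  have hCtC : (Cᵀ * C).PosSemidef := posSemidef_conjTranspose_mul_self C
  have hCCt : (C * Cᵀ).PosSemidef := posSemidef_self_mul_conjTranspose C
  have hM : ((1 : Matrix (Fin m) (Fin m) ℝ) + Cᵀ * C).PosDef :=
    Matrix.PosDef.add_posSemidef Matrix.PosDef.one hCtC
  have hR : ((1 : Matrix (Fin n) (Fin n) ℝ) + C * Cᵀ).PosDef :=
    Matrix.PosDef.add_posSemidef Matrix.PosDef.one hCCt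
  set M := (1 : Matrix (Fin m) (Fin m) ℝ) + Cᵀ * C with hMdef
  set R := (1 : Matrix (Fin n) (Fin n) ℝ) + C * Cᵀ with hRdef
  haveI := hM.isUnit.invertible
  haveI := hR.isUnit.invertible
  have hMinv' : M * M⁻¹ = 1 := mul_inv_of_invertible M
  have hRinv : R⁻¹ * R = 1 := inv_mul_of_invertible R
  have h1 : R * C = C * M := by
    rw [hMdef, hRdef, Matrix.add_mul, Matrix.mul_add, Matrix.one_mul, Matrix.mul_one, Matrix.mul_assoc]
  have hpush : C * M⁻¹ = R⁻¹ * C := by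
    calc C * M⁻¹ = (R⁻¹ * R) * (C * M⁻¹) := by rw [hRinv, Matrix.one_mul]
      _ = R⁻¹ * ((R * C) * M⁻¹) := by simp only [Matrix.mul_assoc]
      _ = R⁻¹ * ((C * M) * M⁻¹) := by rw [h1]
      _ = R⁻¹ * C := by rw [Matrix.mul_assoc, hMinv', Matrix.mul_one]
  have hid : (1 : Matrix (Fin n) (Fin n) ℝ) - C * M⁻¹ * Cᵀ = R⁻¹ := by
    rw [hpush, Matrix.mul_assoc]
    calc (1 : Matrix (Fin n) (Fin n) ℝ) - R⁻¹ * (C * Cᵀ)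
        = R⁻¹ * R - R⁻¹ * (C * Cᵀ) := by rw [hRinv]
      _ = R⁻¹ * (R - C * Cᵀ) := by rw [mul_sub]
      _ = R⁻¹ := by rw [hRdef]; simp
  have halg : Aᵀ * P * A - Aᵀ * P * B * M⁻¹ * Bᵀ * P * A
      = Aᵀ * S * R⁻¹ * S * A := by
    have hPB : P * B = S * C := by rw [← hSS, hC, Matrix.mul_assoc]
    have hBtP : Bᵀ * P = Cᵀ * S := by
      rw [← hSS, hC, transpose_mul, hSt, Matrix.mul_assoc]
    have expand : Aᵀ * P * A - Aᵀ * P * B * M⁻¹ * Bᵀ * P * A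
        = Aᵀ * S * (((1 : Matrix (Fin n) (Fin n) ℝ) - C * M⁻¹ * Cᵀ) * (S * A)) := by
      rw [sub_mul, one_mul, mul_sub]
      have e1 : Aᵀ * P * A = Aᵀ * S * (S * A) := by
        rw [← hSS]; simp only [Matrix.mul_assoc]
      have e2 : Aᵀ * P * B * M⁻¹ * Bᵀ * P * A = Aᵀ * S * (C * M⁻¹ * Cᵀ * (S * A)) := by
        rw [show Aᵀ * P * B * M⁻¹ * Bᵀ * P * A = Aᵀ * (P * B) * M⁻¹ * (Bᵀ * P) * A from by
          simp only [Matrix.mul_assoc], hPB, hBtP]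
        simp only [Matrix.mul_assoc]
      rw [e1, e2]
    rw [expand, hid]; simp only [Matrix.mul_assoc]
  have hRi : (R⁻¹).PosSemidef := hR.inv.posSemidef
  have hpsd : (Aᵀ * S * R⁻¹ * S * A).PosSemidef := by
    have := hRi.conjTranspose_mul_mul_same (S * A)
    have he : (S * A)ᴴ * R⁻¹ * (S * A) = Aᵀ * S * R⁻¹ * S * A := by
      rw [conjTranspose_mul]
      simp only [conjTranspose_eq_transpose_of_trivial, hSt, Matrix.mul_assoc]
    rwa [he] at this
  refine ⟨by rw [hBPB]; exact hM, S, hS, hSS, ?_, ?_⟩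
  · rw [hBPB, hSBBS]; exact halg
  · rw [hSBBS]; exact hpsd

/-- Positive semidefiniteness propagates along the Riccati difference equation. -/
theorem stmt1 {n m N : ℕ} (hn : 0 < n) (hm : 0 < m) (hN : 0 < N)
    (A : ℕ → Matrix (Fin n) (Fin n) ℝ) (B : ℕ → Matrix (Fin n) (Fin m) ℝ)
    (F : Matrix (Fin n) (Fin n) ℝ) (hF : F.PosSemidef)
    (Pm : ℕ → Matrix (Fin n) (Fin n) ℝ)
    (hPmN : Pm N = F)
    (hrec : ∀ k < N, Pm k = (A k)ᵀ * Pm (k+1) * A k -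
      (A k)ᵀ * Pm (k+1) * B k *
        ((1 : Matrix (Fin m) (Fin m) ℝ) + (B k)ᵀ * Pm (k+1) * B k)⁻¹ *
        (B k)ᵀ * Pm (k+1) * A k) :
    (∀ k < N, ((1 : Matrix (Fin m) (Fin m) ℝ) + (B k)ᵀ * Pm (k+1) * B k).PosDef) ∧
    (∀ k ≤ N, (Pm k).PosSemidef) ∧
    (∀ k < N, ∃ S : Matrix (Fin n) (Fin n) ℝ, S.PosSemidef ∧ S * S = Pm (k+1) ∧
      Pm k = (A k)ᵀ * S *
        ((1 : Matrix (Fin n) (Fin n) ℝ) + S * B k * (B k)ᵀ * S)⁻¹ * S * A k) := by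
  have hpsd : ∀ d, d ≤ N → (Pm (N - d)).PosSemidef := by
    intro d
    induction d with
    | zero => intro _; simpa [hPmN] using hF
    | succ d ih =>
      intro hd
      have hd' : d ≤ N := Nat.le_of_succ_le hd
      set k := N - (d + 1) with hk
      have hk1 : k + 1 = N - d := by omega
      have hkN : k < N := by omega
      have hP : (Pm (k + 1)).PosSemidef := by rw [hk1]; exact ih hd'
      obtain ⟨_, S, hS, hSS, heq, hpsd⟩ := riccati_key (A k) (B k) (Pm (k+1)) hP
      have := hrec k hkN
      rw [show (A k)ᵀ * Pm (k+1) * A k -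
        (A k)ᵀ * Pm (k+1) * B k *
          ((1 : Matrix (Fin m) (Fin m) ℝ) + (B k)ᵀ * Pm (k+1) * B k)⁻¹ *
          (B k)ᵀ * Pm (k+1) * A k = (A k)ᵀ * S *
        ((1 : Matrix (Fin n) (Fin n) ℝ) + S * B k * (B k)ᵀ * S)⁻¹ * S * A k from heq] at this
      rw [this]; exact hpsd
  have hpsd' : ∀ k ≤ N, (Pm k).PosSemidef := by
    intro k hkN
    have : k = N - (N - k) := by omega
    rw [this]; exact hpsd (N - k) (by omega)
  refine ⟨?_, hpsd', ?_⟩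
  · intro k hk
    exact (riccati_key (A k) (B k) (Pm (k+1)) (hpsd' (k+1) hk)).1
  · intro k hk
    obtain ⟨_, S, hS, hSS, heq, _⟩ :=
      riccati_key (A k) (B k) (Pm (k+1)) (hpsd' (k+1) hk)
    exact ⟨S, hS, hSS, by rw [hrec k hk]; exact heq⟩
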